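/- For any power series P, Q ∈ A[[x]] with Q(0) a unit, and the sequence defined by P_0 = P, Q_0 = Q, and (P_{k+1}, Q_{k+1}) obtained from a Graeffe step (Q_{k+1}(x²) = Q_k(x)Q_k(-x), and P_{k+1} the appropriate even or odd part of P_k(x)Q_k(-x) according to the parity of the current index N_k, N_{k+1} = ⌊N_k/2⌋), one has [x^{N_k}](P_k/Q_k) = [x^{N_0}](P_0/Q_0) for all k. -/

import Mathlib

/-- Even part: `Σ_i ([x^{2i}]U) x^i`. -/
noncomputable def evenPart {R : Type*} [CommRing R] (U : PowerSeries R) : PowerSeries R :=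
  PowerSeries.mk fun n => PowerSeries.coeff (2 * n) U

/-- Odd part: `Σ_i ([x^{2i+1}]U) x^i`. -/
noncomputable def oddPart {R : Type*} [CommRing R] (U : PowerSeries R) : PowerSeries R :=
  PowerSeries.mk fun n => PowerSeries.coeff (2 * n + 1) U

/-- One Graeffe halving step on state `(P, Q, N)`:
`Q ← ` the `V` with `V(x²) = Q(x)Q(-x)` (even part of `Q(x)Q(-x)`),
`P ← ` even or odd part of `P(x)Q(-x)` according to the parity of `N`, `N ← ⌊N/2⌋`. -/
noncomputable def graeffeStep {A : Type*} [CommRing A]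
    (s : PowerSeries A × PowerSeries A × ℕ) : PowerSeries A × PowerSeries A × ℕ :=
  let U := s.1 * PowerSeries.rescale (-1) s.2.1
  (if s.2.2 % 2 = 0 then evenPart U else oddPart U,
   evenPart (s.2.1 * PowerSeries.rescale (-1) s.2.1),
   s.2.2 / 2)

section Aux

variable {R : Type*} [CommRing R]

open PowerSeries Finset

/-- Substitution `x ↦ x²`, implemented coefficientwise. -/
noncomputable def sqSubst (f : PowerSeries R) : PowerSeries R :=
  PowerSeries.mk fun n => if n % 2 = 0 then PowerSeries.coeff (n / 2) f else 0

lemma coeff_sqSubst_even (f : PowerSeries R) (n : ℕ) :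
    PowerSeries.coeff (2 * n) (sqSubst f) = PowerSeries.coeff n f := by
  simp only [sqSubst, coeff_mk]
  rw [if_pos (by omega), Nat.mul_div_cancel_left _ (by norm_num : (0:ℕ) < 2)]

lemma coeff_sqSubst_odd (f : PowerSeries R) (n : ℕ) :
    PowerSeries.coeff (2 * n + 1) (sqSubst f) = 0 := by
  simp only [sqSubst, coeff_mk]
  rw [if_neg (by omega)]

lemma sqSubst_one : sqSubst (1 : PowerSeries R) = 1 := by
  ext n
  simp only [sqSubst, coeff_mk, PowerSeries.coeff_one]
  split_ifs <;> first | rfl | omega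

lemma sqSubst_mul (f g : PowerSeries R) : sqSubst (f * g) = sqSubst f * sqSubst g := by
  ext n
  rcases Nat.even_or_odd n with ⟨m, rfl⟩ | ⟨m, rfl⟩
  · have hm : m + m = 2 * m := by ring
    rw [hm, coeff_sqSubst_even, PowerSeries.coeff_mul, PowerSeries.coeff_mul]
    have hfil : (∑ p ∈ Finset.HasAntidiagonal.antidiagonal (2 * m),
        PowerSeries.coeff p.1 (sqSubst f) * PowerSeries.coeff p.2 (sqSubst g)) =
        ∑ p ∈ (Finset.HasAntidiagonal.antidiagonal (2 * m)).filter (fun p => p.1 % 2 = 0 ∧ p.2 % 2 = 0),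
          PowerSeries.coeff p.1 (sqSubst f) * PowerSeries.coeff p.2 (sqSubst g) := by
      symm
      apply Finset.sum_filter_of_ne
      intro p hp hne
      by_contra h
      apply hne
      rcases Nat.even_or_odd p.1 with ⟨a, ha⟩ | ⟨a, ha⟩
      · rcases Nat.even_or_odd p.2 with ⟨b, hb⟩ | ⟨b, hb⟩
        · exact absurd ⟨by omega, by omega⟩ h
        · rw [hb, coeff_sqSubst_odd, mul_zero]
      · rw [ha, coeff_sqSubst_odd, zero_mul]
    rw [hfil]
    refine Finset.sum_bij' (fun p _ => ((2 * p.1, 2 * p.2) : ℕ × ℕ))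
      (fun p _ => ((p.1 / 2, p.2 / 2) : ℕ × ℕ)) ?_ ?_ ?_ ?_ ?_
    · intro p hp
      rw [Finset.HasAntidiagonal.mem_antidiagonal] at hp
      show (2 * p.1, 2 * p.2) ∈ Finset.filter _ _
      simp only [Finset.mem_filter, Finset.HasAntidiagonal.mem_antidiagonal]
      omega
    · intro p hp
      simp only [Finset.mem_filter, Finset.HasAntidiagonal.mem_antidiagonal] at hp
      show (p.1 / 2, p.2 / 2) ∈ Finset.HasAntidiagonal.antidiagonal m
      rw [Finset.HasAntidiagonal.mem_antidiagonal]
      omega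
    · intro p hp
      show ((2 * p.1) / 2, (2 * p.2) / 2) = p
      ext <;> simp
    · intro p hp
      simp only [Finset.mem_filter, Finset.HasAntidiagonal.mem_antidiagonal] at hp
      show (2 * (p.1 / 2), 2 * (p.2 / 2)) = p
      ext <;> simp <;> omega
    · intro p hp
      show _ = PowerSeries.coeff (2 * p.1) (sqSubst f) * PowerSeries.coeff (2 * p.2) (sqSubst g)
      rw [coeff_sqSubst_even, coeff_sqSubst_even]
  · rw [coeff_sqSubst_odd, PowerSeries.coeff_mul]
    symm
    apply Finset.sum_eq_zero
    intro p hp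
    rw [Finset.HasAntidiagonal.mem_antidiagonal] at hp
    rcases Nat.even_or_odd p.1 with ⟨a, ha⟩ | ⟨a, ha⟩
    · have h2 : p.2 = 2 * ((p.2 - 1) / 2) + 1 := by omega
      rw [h2, coeff_sqSubst_odd, mul_zero]
    · rw [ha, coeff_sqSubst_odd, zero_mul]

/-- A product `f(x)·f(-x)` has vanishing odd coefficients. -/
lemma coeff_odd_mul_rescale_neg_one (f : PowerSeries R) (n : ℕ) :
    PowerSeries.coeff (2 * n + 1) (f * PowerSeries.rescale (-1) f) = 0 := by
  rw [PowerSeries.coeff_mul]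
  apply Finset.sum_involution (g := fun p _ => Prod.swap p)
  · intro p hp
    rw [Finset.HasAntidiagonal.mem_antidiagonal] at hp
    simp only [coeff_rescale, Prod.fst_swap, Prod.snd_swap]
    have hsign : (-1 : R) ^ p.1 = -(-1 : R) ^ p.2 := by
      rcases Nat.even_or_odd p.1 with h | h
      · have h2 : Odd p.2 := by rcases h with ⟨a, ha⟩; exact ⟨n - a, by omega⟩
        rw [h.neg_one_pow, h2.neg_one_pow, neg_neg]
      · have h2 : Even p.2 := by rcases h with ⟨a, ha⟩; exact ⟨n - a, by omega⟩
        rw [h.neg_one_pow, h2.neg_one_pow]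
    rw [hsign]; ring
  · intro p hp hne heq
    rw [Finset.HasAntidiagonal.mem_antidiagonal] at hp
    have : p.2 = p.1 := congrArg Prod.fst heq
    omega
  · intro p hp
    rw [Finset.HasAntidiagonal.mem_antidiagonal] at *
    simpa using by omega
  · intro p hp; simp

lemma sqSubst_evenPart (f : PowerSeries R) :
    sqSubst (evenPart (f * PowerSeries.rescale (-1) f)) = f * PowerSeries.rescale (-1) f := by
  ext n
  rcases Nat.even_or_odd n with ⟨m, rfl⟩ | ⟨m, rfl⟩
  · rw [show m + m = 2 * m by ring, coeff_sqSubst_even]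
    simp [evenPart]
  · rw [coeff_sqSubst_odd, coeff_odd_mul_rescale_neg_one]

lemma coeff_sq_add_X_sq (f g : PowerSeries R) (n : ℕ) :
    PowerSeries.coeff n (sqSubst f + PowerSeries.X * sqSubst g) =
      if n % 2 = 0 then PowerSeries.coeff (n / 2) f else PowerSeries.coeff (n / 2) g := by
  rw [map_add]
  rcases Nat.even_or_odd n with ⟨m, rfl⟩ | ⟨m, rfl⟩
  · rw [if_pos (by omega), show m + m = 2 * m by ring, coeff_sqSubst_even,
      show (2 * m) / 2 = m by omega]
    rcases Nat.eq_zero_or_pos m with rfl | hm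
    · simp
    · rw [show 2 * m = (2 * (m - 1) + 1) + 1 by omega, PowerSeries.coeff_succ_X_mul,
        coeff_sqSubst_odd, add_zero]
  · rw [if_neg (by omega), show (2 * m + 1) / 2 = m by omega, coeff_sqSubst_odd,
      PowerSeries.coeff_succ_X_mul, coeff_sqSubst_even, zero_add]

lemma even_odd_decomp (f : PowerSeries R) :
    sqSubst (evenPart f) + PowerSeries.X * sqSubst (oddPart f) = f := by
  ext n
  rw [coeff_sq_add_X_sq]
  rcases Nat.even_or_odd n with ⟨m, rfl⟩ | ⟨m, rfl⟩
  · rw [if_pos (by omega), show (m + m) / 2 = m by omega]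
    simp [evenPart]; ring_nf
  · rw [if_neg (by omega), show (2 * m + 1) / 2 = m by omega]
    simp [oddPart]

lemma ringInverse_eq {a b : R} (ha : IsUnit a) (h : a * b = 1) : Ring.inverse a = b := by
  calc Ring.inverse a = Ring.inverse a * (a * b) := by rw [h, mul_one]
    _ = b := by rw [← mul_assoc, Ring.inverse_mul_cancel _ ha, one_mul]

end Aux

section Step

variable {A : Type*} [CommRing A]

open PowerSeries

lemma isUnit_graeffe_Q (P Q : PowerSeries A) (hQ0 : IsUnit (constantCoeff Q)) (N : ℕ) :
    IsUnit (constantCoeff (graeffeStep (P, Q, N)).2.1) := by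
  have : constantCoeff (graeffeStep (P, Q, N)).2.1 =
      constantCoeff Q * constantCoeff Q := by
    show constantCoeff (evenPart (Q * rescale (-1) Q)) = _
    have : constantCoeff (evenPart (Q * rescale (-1) Q)) =
        PowerSeries.coeff 0 (Q * rescale (-1) Q) := by
      simp [evenPart, ← PowerSeries.coeff_zero_eq_constantCoeff]
    rw [this, PowerSeries.coeff_mul]
    simp [Finset.Nat.antidiagonal_zero, PowerSeries.coeff_zero_eq_constantCoeff]
  rw [this]
  exact hQ0.mul hQ0

lemma graeffe_step_coeff (P Q : PowerSeries A) (hQ0 : IsUnit (constantCoeff Q)) (N : ℕ) :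
    PowerSeries.coeff ((graeffeStep (P, Q, N)).2.2)
        ((graeffeStep (P, Q, N)).1 * Ring.inverse (graeffeStep (P, Q, N)).2.1) =
      PowerSeries.coeff N (P * Ring.inverse Q) := by
  set Qm := rescale (-1) Q with hQm
  set W := Q * Qm with hW
  set V := evenPart W with hV
  set U := P * Qm with hU
  have hQunit : IsUnit Q := isUnit_iff_constantCoeff.mpr hQ0
  have hQmunit : IsUnit Qm := by
    apply isUnit_iff_constantCoeff.mpr
    have : constantCoeff Qm = constantCoeff Q := by
      rw [hQm, ← PowerSeries.coeff_zero_eq_constantCoeff, coeff_rescale]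
      simp
    rw [this]; exact hQ0
  have hWunit : IsUnit W := hQunit.mul hQmunit
  have hVsq : sqSubst V = W := sqSubst_evenPart Q
  have hVunit : IsUnit V := isUnit_iff_constantCoeff.mpr (by
    have := isUnit_graeffe_Q P Q hQ0 N
    exact this)
  -- inverse Q = Qm * inverse W
  have hinvQ : Ring.inverse Q = Qm * Ring.inverse W := by
    apply ringInverse_eq hQunit
    rw [← mul_assoc, ← hW, Ring.mul_inverse_cancel _ hWunit]
  -- inverse W = sqSubst (inverse V)
  have hinvW : Ring.inverse W = sqSubst (Ring.inverse V) := by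
    apply ringInverse_eq hWunit
    rw [← hVsq, ← sqSubst_mul, Ring.mul_inverse_cancel _ hVunit, sqSubst_one]
  have hrhs : P * Ring.inverse Q = U * sqSubst (Ring.inverse V) := by
    rw [hinvQ, hinvW, hU, mul_assoc]
  set Z := Ring.inverse V with hZ
  have hdecomp : U * sqSubst Z =
      sqSubst (evenPart U * Z) + PowerSeries.X * sqSubst (oddPart U * Z) := by
    conv_lhs => rw [← even_odd_decomp U]
    rw [add_mul, mul_assoc, ← sqSubst_mul, ← sqSubst_mul]
  have hcoeff : PowerSeries.coeff N (P * Ring.inverse Q) =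
      if N % 2 = 0 then PowerSeries.coeff (N / 2) (evenPart U * Z)
      else PowerSeries.coeff (N / 2) (oddPart U * Z) := by
    rw [hrhs, hdecomp, coeff_sq_add_X_sq]
  rw [hcoeff]
  show PowerSeries.coeff (N / 2)
      ((if N % 2 = 0 then evenPart U else oddPart U) * Ring.inverse V) = _
  split_ifs <;> rfl

end Step

/-- Along the Graeffe iteration `(P_k, Q_k, N_k)` starting from `(P, Q, N)`
with `Q(0)` a unit, the extracted coefficient is invariant:
`[x^{N_k}](P_k/Q_k) = [x^N](P/Q)` for all `k`. -/
theorem graeffe_iteration_invariant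
    {A : Type*} [CommRing A] (P Q : PowerSeries A)
    (hQ0 : IsUnit (PowerSeries.constantCoeff Q)) (N : ℕ) :
    ∀ k : ℕ,
      PowerSeries.coeff ((graeffeStep^[k] (P, Q, N)).2.2)
          ((graeffeStep^[k] (P, Q, N)).1 * Ring.inverse (graeffeStep^[k] (P, Q, N)).2.1) =
        PowerSeries.coeff N (P * Ring.inverse Q) := by
  intro k
  induction k generalizing P Q hQ0 N with
  | zero => simp
  | succ k ih =>
    rw [Function.iterate_succ_apply]
    have hV0 := isUnit_graeffe_Q P Q hQ0 N
    have := ih (graeffeStep (P, Q, N)).1 (graeffeStep (P, Q, N)).2.1 hV0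
      (graeffeStep (P, Q, N)).2.2
    rw [this]
    exact graeffe_step_coeff P Q hQ0 N
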